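/- arXiv:2410.18865 — 2 statements merged into one kernel-verified Lean document; each statement's English description precedes it below -/
import Mathlib

section
/- Let x be an orthogonal transformation of V permuting Φ, 0 < θ ≤ π, and let e ∈ closure(C₀) be a Φ-regular point of V_x^θ. Then Φ(x) ⊆ Ψ := {γ ∈ Φ : V_x^θ ⊆ H_γ}. Moreover, for γ ∈ Φ⁺ \ Ψ, n_x(γ) equals the minimal integer i ≥ 1 such that (x^{-i}(e), γ) < 0. -/
/-- `V_x^θ = {v | x v + x⁻¹ v = 2 cos θ • v}`. -/
def Vtheta {V : Type*} [NormedAddCommGroup V] [InnerProductSpace ℝ V]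
    (x : V ≃ₗᵢ[ℝ] V) (θ : ℝ) : Set V :=
  {v | x v + x.symm v = (2 * Real.cos θ) • v}

/-- minimal `i ≥ 1` with `(x^i) γ ∈ Φneg` (or `0` if none exists). -/
noncomputable def nx {V : Type*} [NormedAddCommGroup V] [InnerProductSpace ℝ V]
    (x : V ≃ₗᵢ[ℝ] V) (Φneg : Set V) (γ : V) : ℕ :=
  sInf {i : ℕ | 1 ≤ i ∧ (x ^ i) γ ∈ Φneg}

section aux
variable {V : Type*} [NormedAddCommGroup V] [InnerProductSpace ℝ V]

lemma pow_apply_succ' (x : V ≃ₗᵢ[ℝ] V) (i : ℕ) (v : V) :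
    (x ^ (i + 1)) v = x ((x ^ i) v) := by
  rw [pow_succ', LinearIsometryEquiv.coe_mul]; rfl

lemma pow_apply_succ (x : V ≃ₗᵢ[ℝ] V) (i : ℕ) (v : V) :
    (x ^ (i + 1)) v = (x ^ i) (x v) := by
  rw [pow_succ, LinearIsometryEquiv.coe_mul]; rfl

lemma symm_pow_succ (x : V ≃ₗᵢ[ℝ] V) (i : ℕ) (v : V) :
    (x ^ (i + 1)).symm v = x.symm ((x ^ i).symm v) := by
  apply (x ^ (i + 1)).injective
  rw [LinearIsometryEquiv.apply_symm_apply, pow_apply_succ,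
    x.apply_symm_apply, (x ^ i).apply_symm_apply]

lemma Vtheta_inv (x : V ≃ₗᵢ[ℝ] V) (θ : ℝ) {v : V} (hv : v ∈ Vtheta x θ) :
    x v ∈ Vtheta x θ := by
  have : x (x v + x.symm v) = x ((2 * Real.cos θ) • v) := by rw [hv]
  simpa [Vtheta, map_add, map_smul, x.apply_symm_apply] using this

lemma Vtheta_inv_symm (x : V ≃ₗᵢ[ℝ] V) (θ : ℝ) {v : V} (hv : v ∈ Vtheta x θ) :
    x.symm v ∈ Vtheta x θ := by
  have : x.symm (x v + x.symm v) = x.symm ((2 * Real.cos θ) • v) := by rw [hv]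
  simpa [Vtheta, map_add, map_smul, x.symm_apply_apply, add_comm] using this

lemma Vtheta_pow_inv (x : V ≃ₗᵢ[ℝ] V) (θ : ℝ) (i : ℕ) {v : V} (hv : v ∈ Vtheta x θ) :
    (x ^ i) v ∈ Vtheta x θ := by
  induction i with
  | zero => simpa using hv
  | succ n ih => rw [pow_apply_succ']; exact Vtheta_inv x θ ih

lemma Vtheta_pow_inv_symm (x : V ≃ₗᵢ[ℝ] V) (θ : ℝ) (i : ℕ) {v : V} (hv : v ∈ Vtheta x θ) :
    (x ^ i).symm v ∈ Vtheta x θ := by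
  induction i with
  | zero => rw [pow_zero]; exact hv
  | succ n ih => rw [symm_pow_succ]; exact Vtheta_inv_symm x θ ih

lemma inner_symm_pow (x : V ≃ₗᵢ[ℝ] V) (i : ℕ) (e γ : V) :
    (inner ℝ ((x ^ i).symm e) γ : ℝ) = inner ℝ e ((x ^ i) γ) := by
  conv_rhs => rw [← (x ^ i).apply_symm_apply e]
  rw [LinearIsometryEquiv.inner_map_map]

end aux

/-- with `e ∈ closure C₀` a `Φ`-regular point of `V_x^θ`
(`0 < θ ≤ π`), one has `Φ(x) ⊆ Ψ := {γ ∈ Φ | V_x^θ ⊆ H_γ}`, and for every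
`γ ∈ Φ⁺ \ Ψ`, `n_x γ` equals the minimal `i ≥ 1` with `⟪x^{-i} e, γ⟫ < 0`. -/
theorem rotation_nx_formula {V : Type*} [NormedAddCommGroup V]
    [InnerProductSpace ℝ V] [FiniteDimensional ℝ V]
    (Φpos : Set V) (x : V ≃ₗᵢ[ℝ] V) (θ : ℝ) (e : V)
    (hfin : (Φpos ∪ -Φpos).Finite)
    (hdisj : Disjoint Φpos (-Φpos))
    (hx : x '' (Φpos ∪ -Φpos) = Φpos ∪ -Φpos)
    (hord : ∃ m : ℕ, 1 ≤ m ∧ x ^ m = 1)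
    (hθ : 0 < θ ∧ θ ≤ Real.pi)
    (he : e ∈ Vtheta x θ) (hdom : ∀ α ∈ Φpos, 0 ≤ (inner ℝ e α : ℝ))
    (hreg : ∀ γ ∈ Φpos ∪ -Φpos, (inner ℝ e γ : ℝ) = 0 →
      ∀ v ∈ Vtheta x θ, (inner ℝ v γ : ℝ) = 0) :
    ({γ ∈ Φpos ∪ -Φpos | ∀ i : ℤ, ((x ^ i) γ ∈ Φpos ↔ γ ∈ Φpos)} ⊆
      {γ ∈ Φpos ∪ -Φpos | ∀ v ∈ Vtheta x θ, (inner ℝ v γ : ℝ) = 0}) ∧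
    (∀ γ ∈ Φpos, ¬ (∀ v ∈ Vtheta x θ, (inner ℝ v γ : ℝ) = 0) →
      nx x (-Φpos) γ = sInf {i : ℕ | 1 ≤ i ∧ (inner ℝ ((x ^ i).symm e) γ : ℝ) < 0}) := by
  set Φ := Φpos ∪ -Φpos with hΦ
  -- Φ is invariant under x
  have hxΦ : ∀ γ ∈ Φ, x γ ∈ Φ := fun γ hγ => hx ▸ Set.mem_image_of_mem x hγ
  have hxΦpow : ∀ (i : ℕ), ∀ γ ∈ Φ, (x ^ i) γ ∈ Φ := by
    intro i
    induction i with
    | zero => intro γ hγ; simpa using hγ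
    | succ n ih => intro γ hγ; rw [pow_apply_succ']; exact hxΦ _ (ih γ hγ)
  constructor
  · -- Part 1
    rintro γ ⟨hγΦ, hper⟩
    refine ⟨hγΦ, ?_⟩
    by_contra hnΨ
    push_neg at hnΨ
    -- e is not orthogonal to γ
    have heγ : (inner ℝ e γ : ℝ) ≠ 0 := by
      intro h0
      obtain ⟨v, hv, hvγ⟩ := hnΨ
      exact hvγ (hreg γ hγΦ h0 v hv)
    -- get δ = ±γ with δ ∈ Φpos, all (x^i) δ ∈ Φpos, and ⟪e,δ⟫ > 0
    obtain ⟨δ, hδpos, hδpow, heδ⟩ :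
        ∃ δ : V, δ ∈ Φpos ∧ (∀ i : ℕ, (x ^ i) δ ∈ Φpos) ∧ 0 < (inner ℝ e δ : ℝ) := by
      have hper' : ∀ i : ℕ, ((x ^ i) γ ∈ Φpos ↔ γ ∈ Φpos) := by
        intro i
        have := hper (i : ℤ)
        rwa [zpow_natCast] at this
      have hγΦ2 := hγΦ
      rcases hγΦ2 with hpos | hneg
      · exact ⟨γ, hpos, fun i => (hper' i).mpr hpos,
          lt_of_le_of_ne (hdom γ hpos) (Ne.symm heγ)⟩
      · have hγnotpos : γ ∉ Φpos := fun h => hdisj.ne_of_mem h hneg rfl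
        refine ⟨-γ, Set.mem_neg.mp hneg, ?_, ?_⟩
        · intro i
          have h1 : (x ^ i) γ ∈ Φ := hxΦpow i γ hγΦ
          have h2 : (x ^ i) γ ∉ Φpos := fun h => hγnotpos ((hper' i).mp h)
          have h3 : (x ^ i) γ ∈ -Φpos := h1.resolve_left h2
          rw [map_neg]
          exact Set.mem_neg.mp h3
        · have := hdom (-γ) (Set.mem_neg.mp hneg)
          rw [inner_neg_right] at this ⊢
          rcases lt_or_eq_of_le this with h | h
          · exact h
          · exact absurd (by linarith : (inner ℝ e γ : ℝ) = 0) heγ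
    -- the averaged vector w
    obtain ⟨m, hm1, hxm⟩ := hord
    set w : V := ∑ i ∈ Finset.range m, (x ^ i).symm e with hw
    have hwθ : w ∈ Vtheta x θ := by
      simp only [Vtheta, Set.mem_setOf_eq, hw, map_sum, Finset.smul_sum,
        ← Finset.sum_add_distrib]
      refine Finset.sum_congr rfl fun i _ => ?_
      exact Vtheta_pow_inv_symm x θ i he
    have hfix : x.symm w = w := by
      have key : ∀ i : ℕ, x.symm ((x ^ i).symm e) = (x ^ (i + 1)).symm e :=
        fun i => (symm_pow_succ x i e).symm
      calc x.symm w = ∑ i ∈ Finset.range m, (x ^ (i + 1)).symm e := by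
            rw [hw, map_sum]; exact Finset.sum_congr rfl fun i _ => key i
        _ = ∑ i ∈ Finset.range (m + 1), (x ^ i).symm e - (x ^ 0).symm e := by
            rw [Finset.sum_range_succ' (fun i => (x ^ i).symm e) m]; abel
        _ = w := by
            rw [Finset.sum_range_succ, hxm]
            simp [hw]
    have hxw : x w = w := by conv_lhs => rw [← hfix, x.apply_symm_apply]
    -- w = 0
    have hw0 : w = 0 := by
      have h1 : x w + x.symm w = (2 * Real.cos θ) • w := hwθ
      rw [hxw, hfix] at h1
      have h2 : (2 - 2 * Real.cos θ) • w = 0 := by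
        rw [sub_smul]
        rw [show (2 : ℝ) • w = w + w by module] at *
        rw [← h1]; abel
      have hcos : Real.cos θ < 1 := by
        have := Real.cos_lt_cos_of_nonneg_of_le_pi le_rfl hθ.2 hθ.1
        simpa using this
      have : (2 - 2 * Real.cos θ) ≠ 0 := by nlinarith
      exact (smul_eq_zero.mp h2).resolve_left this
    -- but ⟪w, δ⟫ > 0
    have hpos : 0 < (inner ℝ w δ : ℝ) := by
      rw [hw, sum_inner]
      apply Finset.sum_pos'
      · intro i _
        rw [inner_symm_pow]
        exact hdom _ (hδpow i)
      · refine ⟨0, Finset.mem_range.mpr hm1, ?_⟩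
        rw [inner_symm_pow]
        simpa using heδ
    rw [hw0] at hpos
    simp at hpos
  · -- Part 2
    intro γ hγpos hnΨ
    have hγΦ : γ ∈ Φ := Set.mem_union_left _ hγpos
    have hset : {i : ℕ | 1 ≤ i ∧ (x ^ i) γ ∈ -Φpos} =
        {i : ℕ | 1 ≤ i ∧ (inner ℝ ((x ^ i).symm e) γ : ℝ) < 0} := by
      ext i
      simp only [Set.mem_setOf_eq, and_congr_right_iff]
      intro _
      rw [inner_symm_pow]
      constructor
      · intro hneg
        have h1 : -(x ^ i) γ ∈ Φpos := Set.mem_neg.mp hneg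
        have h2 : (inner ℝ e ((x ^ i) γ) : ℝ) ≤ 0 := by
          have := hdom _ h1
          rw [inner_neg_right] at this
          linarith
        rcases lt_or_eq_of_le h2 with h | h
        · exact h
        · exfalso
          have hΨ : ∀ v ∈ Vtheta x θ, (inner ℝ v ((x ^ i) γ) : ℝ) = 0 :=
            hreg _ (hxΦpow i γ hγΦ) h
          apply hnΨ
          intro v hv
          have := hΨ ((x ^ i) v) (Vtheta_pow_inv x θ i hv)
          rwa [LinearIsometryEquiv.inner_map_map] at this
      · intro hlt
        have h1 : (x ^ i) γ ∉ Φpos := fun h => absurd (hdom _ h) (not_le.mpr hlt)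
        exact (hxΦpow i γ hγΦ).resolve_left h1
    rw [nx, hset]
end

section
/- With the hypotheses of the previous lemma (e ∈ closure(C₀) a Φ-regular point of V_x^θ, 0 < θ ≤ π, Ψ = {γ ∈ Φ : V_x^θ ⊆ H_γ}): for any α, β ∈ Φ⁺ \ Ψ with α + β ∈ Φ⁺, one has n_x(α+β) ≤ max{n_x(α), n_x(β)}. -/
open Real

private lemma min_arg_le_arg_add {w₁ w₂ : ℂ} (h₁ : 0 < w₁.re) (h₂ : 0 < w₂.re) :
    min w₁.arg w₂.arg ≤ (w₁ + w₂).arg := by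
  have h : 0 < (w₁ + w₂).re := by rw [Complex.add_re]; linarith
  have harg : ∀ w : ℂ, 0 < w.re → -(π/2) < w.arg ∧ w.arg < π/2 := fun w hw =>
    abs_lt.mp (Complex.abs_arg_lt_pi_div_two_iff.mpr (Or.inl hw))
  have h1' := harg _ h₁
  have h2' := harg _ h₂
  have h' := harg _ h
  set m := min w₁.arg w₂.arg with hm
  have hml : -(π/2) < m := lt_min h1'.1 h2'.1
  have hmr : m < π/2 := min_lt_of_left_lt h1'.2
  have key : ∀ w : ℂ, 0 < w.re → m ≤ w.arg → Real.tan m * w.re ≤ w.im := by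
    intro w hw hmw
    have hwb := harg _ hw
    have ht : Real.tan m ≤ Real.tan w.arg :=
      Real.strictMonoOn_tan.monotoneOn ⟨hml, hmr⟩ ⟨hwb.1, hwb.2⟩ hmw
    rw [Complex.tan_arg] at ht
    calc Real.tan m * w.re ≤ (w.im / w.re) * w.re := by
          exact mul_le_mul_of_nonneg_right ht hw.le
      _ = w.im := by field_simp
  by_contra hcon
  push_neg at hcon
  have ht : Real.tan (w₁ + w₂).arg < Real.tan m :=
    Real.strictMonoOn_tan ⟨h'.1, h'.2⟩ ⟨hml, hmr⟩ hcon
  rw [Complex.tan_arg] at ht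
  have k1 := key _ h₁ (min_le_left _ _)
  have k2 := key _ h₂ (min_le_right _ _)
  have : (w₁ + w₂).im < Real.tan m * (w₁ + w₂).re := by
    calc (w₁ + w₂).im = ((w₁ + w₂).im / (w₁ + w₂).re) * (w₁ + w₂).re := by field_simp
      _ < Real.tan m * (w₁ + w₂).re := by
          exact mul_lt_mul_of_pos_right ht h
  rw [Complex.add_re, Complex.add_im] at this
  nlinarith [k1, k2]

private lemma cos_form (a b u : ℝ) :
    a * Real.cos u + b * Real.sin u
      = ‖(a : ℂ) - b * Complex.I‖
        * Real.cos (((a : ℂ) - b * Complex.I).arg + u) := by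
  set w : ℂ := (a : ℂ) - b * Complex.I with hw
  have h1 : (w * Complex.exp (u * Complex.I)).re = a * Real.cos u + b * Real.sin u := by
    rw [Complex.mul_re, Complex.exp_ofReal_mul_I_re, Complex.exp_ofReal_mul_I_im]
    simp [hw]
  have h2 : (w * Complex.exp (u * Complex.I)).re
      = ‖w‖ * Real.cos (w.arg + u) := by
    conv_lhs => rw [← Complex.norm_mul_exp_arg_mul_I w]
    rw [mul_assoc, ← Complex.exp_add, ← add_mul, ← Complex.ofReal_add]
    rw [Complex.re_ofReal_mul, Complex.exp_ofReal_mul_I_re]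
  rw [← h1, h2]

/-- with `e ∈ closure C₀` a `Φ`-regular point of `V_x^θ`
(`0 < θ ≤ π`) and `Ψ = {γ ∈ Φ | V_x^θ ⊆ H_γ}`: for all `α, β ∈ Φ⁺ \ Ψ` with
`α + β ∈ Φ⁺` one has `n_x(α+β) ≤ max (n_x α) (n_x β)`. -/
theorem rotation_max_inequality {V : Type*} [NormedAddCommGroup V]
    [InnerProductSpace ℝ V] [FiniteDimensional ℝ V]
    (Φpos : Set V) (x : V ≃ₗᵢ[ℝ] V) (θ : ℝ) (e : V)
    (hfin : (Φpos ∪ -Φpos).Finite)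
    (hdisj : Disjoint Φpos (-Φpos))
    (hx : x '' (Φpos ∪ -Φpos) = Φpos ∪ -Φpos)
    (hord : ∃ m : ℕ, 1 ≤ m ∧ x ^ m = 1)
    (hθ : 0 < θ ∧ θ ≤ Real.pi)
    (he : e ∈ Vtheta x θ) (hdom : ∀ α ∈ Φpos, 0 ≤ (inner ℝ e α : ℝ))
    (hreg : ∀ γ ∈ Φpos ∪ -Φpos, (inner ℝ e γ : ℝ) = 0 →
      ∀ v ∈ Vtheta x θ, (inner ℝ v γ : ℝ) = 0) :
    ∀ α ∈ Φpos, ∀ β ∈ Φpos,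
      ¬ (∀ v ∈ Vtheta x θ, (inner ℝ v α : ℝ) = 0) →
      ¬ (∀ v ∈ Vtheta x θ, (inner ℝ v β : ℝ) = 0) →
      α + β ∈ Φpos →
      nx x (-Φpos) (α + β) ≤ max (nx x (-Φpos) α) (nx x (-Φpos) β) := by
  intro α hα β hβ hαn hβn hs
  unfold nx
  obtain ⟨hθ0, hθπ⟩ := hθ
  have hv' : x e + x.symm e = (2 * Real.cos θ) • e := he
  -- Vtheta is x-invariant
  have hVinv : ∀ v ∈ Vtheta x θ, x v ∈ Vtheta x θ := by
    intro v hv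
    have hv1 : x v + x.symm v = (2 * Real.cos θ) • v := hv
    have h2 := congrArg x hv1
    rw [map_add, map_smul, x.apply_symm_apply] at h2
    show x (x v) + x.symm (x v) = (2 * Real.cos θ) • (x v)
    rw [x.symm_apply_apply]
    exact h2
  have hVpow : ∀ (i : ℕ), ∀ v ∈ Vtheta x θ, (x ^ i) v ∈ Vtheta x θ := by
    intro i
    induction i with
    | zero => intro v hv; simpa using hv
    | succ n ih =>
        intro v hv
        have h1 : (x ^ (n + 1)) v = x ((x ^ n) v) := by rw [pow_succ']; rfl
        rw [h1]
        exact hVinv _ (ih v hv)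
  -- powers of x preserve Φ
  have hΦx : ∀ γ ∈ Φpos ∪ -Φpos, x γ ∈ Φpos ∪ -Φpos := by
    intro γ hγ
    rw [← hx]
    exact Set.mem_image_of_mem x hγ
  have hΦpow : ∀ (i : ℕ), ∀ γ ∈ Φpos ∪ -Φpos, (x ^ i) γ ∈ Φpos ∪ -Φpos := by
    intro i
    induction i with
    | zero => intro γ hγ; simpa using hγ
    | succ n ih =>
        intro γ hγ
        have h1 : (x ^ (n + 1)) γ = x ((x ^ n) γ) := by rw [pow_succ']; rfl
        rw [h1]
        exact hΦx _ (ih γ hγ)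
  -- inverse powers
  have hxinv : ∀ (i : ℕ) (v : V), (x ^ i) ((x.symm ^ i) v) = v := by
    intro i
    induction i with
    | zero => intro v; simp
    | succ n ih =>
        intro v
        have h1 : (x.symm ^ (n + 1)) v = (x.symm ^ n) (x.symm v) := by rw [pow_succ]; rfl
        have h2 : ∀ w : V, (x ^ (n + 1)) w = x ((x ^ n) w) := by
          intro w; rw [pow_succ']; rfl
        rw [h1, h2, ih (x.symm v), x.apply_symm_apply]
  have hinner : ∀ (i : ℕ) (γ : V),
      (inner ℝ e ((x ^ i) γ) : ℝ) = (inner ℝ ((x.symm ^ i) e) γ : ℝ) := by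
    intro i γ
    have h1 := (x ^ i).inner_map_map ((x.symm ^ i) e) γ
    rw [hxinv i e] at h1
    exact h1
  -- negativity criterion
  have hposS : ∀ γ ∈ Φpos ∪ -Φpos, ∀ i : ℕ,
      (inner ℝ e ((x ^ i) γ) : ℝ) < 0 → (x ^ i) γ ∈ -Φpos := by
    intro γ hγ i hneg
    rcases hΦpow i γ hγ with h | h
    · exact absurd (hdom _ h) (by linarith)
    · exact h
  -- strictness
  have hstrict : ∀ γ : V, ¬ (∀ v ∈ Vtheta x θ, (inner ℝ v γ : ℝ) = 0) → ∀ i : ℕ,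
      (x ^ i) γ ∈ -Φpos → (inner ℝ e ((x ^ i) γ) : ℝ) < 0 := by
    intro γ hγn i hmem
    have h1 : -((x ^ i) γ) ∈ Φpos := Set.mem_neg.mp hmem
    have h2 : 0 ≤ (inner ℝ e (-((x ^ i) γ)) : ℝ) := hdom _ h1
    rw [inner_neg_right] at h2
    rcases lt_or_eq_of_le (by linarith : (inner ℝ e ((x ^ i) γ) : ℝ) ≤ 0) with h | h
    · exact h
    · exfalso
      apply hγn
      intro v hv
      have h3 := hreg ((x ^ i) γ) (Or.inr hmem) h ((x ^ i) v) (hVpow i v hv)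
      have h4 := (x ^ i).inner_map_map v γ
      rw [h3] at h4
      exact h4.symm
  -- positivity of inner products with e
  have hepos : ∀ γ ∈ Φpos, ¬ (∀ v ∈ Vtheta x θ, (inner ℝ v γ : ℝ) = 0) →
      0 < (inner ℝ e γ : ℝ) := by
    intro γ hγ hγn
    rcases lt_or_eq_of_le (hdom γ hγ) with h | h
    · exact h
    · exact absurd (hreg γ (Or.inl hγ) h.symm) hγn
  have heα : 0 < (inner ℝ e α : ℝ) := hepos α hα hαn
  have heβ : 0 < (inner ℝ e β : ℝ) := hepos β hβ hβn
  have heαβ : 0 < (inner ℝ e (α + β) : ℝ) := by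
    rw [inner_add_right]; linarith
  -- case split on θ = π
  rcases lt_or_eq_of_le hθπ with hlt | hpi
  · -- main case 0 < θ < π
    have hsin : 0 < Real.sin θ := Real.sin_pos_of_pos_of_lt_pi hθ0 hlt
    set e' : V := (Real.sin θ)⁻¹ • (x e - Real.cos θ • e) with he'def
    have hxe : x e = Real.cos θ • e + Real.sin θ • e' := by
      rw [he'def, smul_smul, mul_inv_cancel₀ hsin.ne', one_smul]
      abel
    have hye : x.symm e = Real.cos θ • e - Real.sin θ • e' := by
      have h := hv'
      rw [hxe] at h
      have h2 : x.symm e = (2 * Real.cos θ) • e - (Real.cos θ • e + Real.sin θ • e') := by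
        rw [eq_sub_iff_add_eq, add_comm]; exact h
      rw [h2]; module
    have hye' : x.symm e' = Real.sin θ • e + Real.cos θ • e' := by
      rw [he'def, map_smul, map_sub, map_smul, x.symm_apply_apply, hye]
      match_scalars
      · field_simp
        nlinarith [Real.sin_sq_add_cos_sq θ]
      · field_simp
    have hpow : ∀ i : ℕ,
        (x.symm ^ i) e = Real.cos (i * θ) • e - Real.sin (i * θ) • e' ∧
        (x.symm ^ i) e' = Real.sin (i * θ) • e + Real.cos (i * θ) • e' := by
      intro i
      induction i with
      | zero => simp
      | succ n ih =>
          have hs' : ∀ v : V, (x.symm ^ (n + 1)) v = (x.symm ^ n) (x.symm v) := by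
            intro v; rw [pow_succ]; rfl
          have hcast : ((n + 1 : ℕ) : ℝ) * θ = (n : ℝ) * θ + θ := by push_cast; ring
          constructor
          · rw [hs', hye, map_sub, map_smul, map_smul, ih.1, ih.2, hcast,
              Real.cos_add, Real.sin_add]
            module
          · rw [hs', hye', map_add, map_smul, map_smul, ih.1, ih.2, hcast,
              Real.cos_add, Real.sin_add]
            module
    -- the key cosine formula
    set w : V → ℂ :=
      fun γ => ((inner ℝ e γ : ℝ) : ℂ) - ((-(inner ℝ e' γ : ℝ) : ℝ) : ℂ) * Complex.I with hwdef
    have hwre : ∀ γ : V, (w γ).re = (inner ℝ e γ : ℝ) := by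
      intro γ; simp [hwdef]
    have hgw : ∀ (γ : V) (i : ℕ), (inner ℝ e ((x ^ i) γ) : ℝ)
        = ‖w γ‖ * Real.cos ((w γ).arg + i * θ) := by
      intro γ i
      rw [hinner i γ, (hpow i).1, inner_sub_left, real_inner_smul_left, real_inner_smul_left]
      have h1 := cos_form (inner ℝ e γ : ℝ) (-(inner ℝ e' γ : ℝ)) ((i : ℝ) * θ)
      simp only [hwdef]
      rw [← h1]
      ring
    -- Lemma A : negativity at i forces t < i
    have lemA : ∀ γ : V, 0 < (w γ).re → ∀ i : ℕ,
        (inner ℝ e ((x ^ i) γ) : ℝ) < 0 → (π / 2 - (w γ).arg) / θ < (i : ℝ) := by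
      intro γ hre i hneg
      have hargb := abs_lt.mp (Complex.abs_arg_lt_pi_div_two_iff.mpr (Or.inl hre))
      rw [hgw γ i] at hneg
      have hrpos : 0 < ‖w γ‖ := by
        refine norm_pos_iff.mpr ?_
        intro h0
        rw [h0] at hre; simp at hre
      have hcos : Real.cos ((w γ).arg + i * θ) < 0 := by
        by_contra hc
        push_neg at hc
        exact absurd (mul_nonneg hrpos.le hc) (by linarith)
      have hgt : π / 2 < (w γ).arg + i * θ := by
        by_contra hc
        push_neg at hc
        have h0 : (0 : ℝ) ≤ (i : ℝ) * θ :=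
          mul_nonneg (Nat.cast_nonneg i) hθ0.le
        have := Real.cos_nonneg_of_neg_pi_div_two_le_of_le (by linarith [hargb.1]) hc
        linarith
      rw [div_lt_iff₀ hθ0]
      linarith
    -- Lemma B : ⌊t⌋ + 1 is an index where the root goes negative
    have lemB : ∀ γ ∈ Φpos ∪ -Φpos, 0 < (w γ).re →
        1 ≤ ⌊(π / 2 - (w γ).arg) / θ⌋₊ + 1 ∧
        (x ^ (⌊(π / 2 - (w γ).arg) / θ⌋₊ + 1)) γ ∈ -Φpos := by
      intro γ hγΦ hre
      have hargb := abs_lt.mp (Complex.abs_arg_lt_pi_div_two_iff.mpr (Or.inl hre))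
      set t : ℝ := (π / 2 - (w γ).arg) / θ with htdef
      have ht0 : 0 < t := div_pos (by linarith [hargb.2]) hθ0
      set i : ℕ := ⌊t⌋₊ + 1 with hidef
      have hi1 : t < (i : ℝ) := by
        rw [hidef]; push_cast; exact Nat.lt_floor_add_one t
      have hi2 : (i : ℝ) ≤ t + 1 := by
        rw [hidef]; push_cast
        have := Nat.floor_le ht0.le
        linarith
      have hrpos : 0 < ‖w γ‖ := by
        refine norm_pos_iff.mpr ?_
        intro h0
        rw [h0] at hre; simp at hre
      have htθ : t * θ = π / 2 - (w γ).arg := by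
        rw [htdef]; field_simp
      have hneg : (inner ℝ e ((x ^ i) γ) : ℝ) < 0 := by
        rw [hgw γ i]
        have hl : π / 2 < (w γ).arg + i * θ := by
          have h3 : t * θ < (i : ℝ) * θ := mul_lt_mul_of_pos_right hi1 hθ0
          linarith
        have hr : (w γ).arg + i * θ < π + π / 2 := by
          have h4 : (i : ℝ) * θ ≤ (t + 1) * θ := mul_le_mul_of_nonneg_right hi2 hθ0.le
          nlinarith
        exact mul_neg_of_pos_of_neg hrpos (Real.cos_neg_of_pi_div_two_lt_of_lt hl hr)
      exact ⟨Nat.le_add_left 1 _, hposS γ hγΦ i hneg⟩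
    -- apply to α, β, α+β
    have hwα : 0 < (w α).re := by rw [hwre]; exact heα
    have hwβ : 0 < (w β).re := by rw [hwre]; exact heβ
    have hwαβ : 0 < (w (α + β)).re := by rw [hwre]; exact heαβ
    have hwadd : w (α + β) = w α + w β := by
      simp only [hwdef, inner_add_right]
      push_cast
      ring
    have hSα := lemB α (Or.inl hα) hwα
    have hSβ := lemB β (Or.inl hβ) hwβ
    have hneα : {i : ℕ | 1 ≤ i ∧ (x ^ i) α ∈ -Φpos}.Nonempty := ⟨_, hSα⟩
    have hneβ : {i : ℕ | 1 ≤ i ∧ (x ^ i) β ∈ -Φpos}.Nonempty := ⟨_, hSβ⟩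
    have hnα := Nat.sInf_mem hneα
    have hnβ := Nat.sInf_mem hneβ
    set nα := sInf {i : ℕ | 1 ≤ i ∧ (x ^ i) α ∈ -Φpos} with hnαdef
    set nβ := sInf {i : ℕ | 1 ≤ i ∧ (x ^ i) β ∈ -Φpos} with hnβdef
    have htα : (π / 2 - (w α).arg) / θ < (nα : ℝ) :=
      lemA α hwα nα (hstrict α hαn nα hnα.2)
    have htβ : (π / 2 - (w β).arg) / θ < (nβ : ℝ) :=
      lemA β hwβ nβ (hstrict β hβn nβ hnβ.2)
    have hSαβ := lemB (α + β) (Or.inl hs) hwαβ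
    have hle : sInf {i : ℕ | 1 ≤ i ∧ (x ^ i) (α + β) ∈ -Φpos}
        ≤ ⌊(π / 2 - (w (α + β)).arg) / θ⌋₊ + 1 :=
      Nat.sInf_le hSαβ
    refine hle.trans ?_
    have hargmin : min (w α).arg (w β).arg ≤ (w (α + β)).arg := by
      rw [hwadd]; exact min_arg_le_arg_add hwα hwβ
    have htmax : (π / 2 - (w (α + β)).arg) / θ
        ≤ max ((π / 2 - (w α).arg) / θ) ((π / 2 - (w β).arg) / θ) := by
      rcases le_total (w α).arg (w β).arg with hab | hab
      · have h1 : (w α).arg ≤ (w (α + β)).arg := by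
          rw [min_eq_left hab] at hargmin; exact hargmin
        exact le_max_of_le_left ((div_le_div_iff_of_pos_right hθ0).mpr (by linarith))
      · have h1 : (w β).arg ≤ (w (α + β)).arg := by
          rw [min_eq_right hab] at hargmin; exact hargmin
        exact le_max_of_le_right ((div_le_div_iff_of_pos_right hθ0).mpr (by linarith))
    have hfinal : (π / 2 - (w (α + β)).arg) / θ < ((max nα nβ : ℕ) : ℝ) := by
      have h1 : ((max nα nβ : ℕ) : ℝ) = max (nα : ℝ) (nβ : ℝ) := by
        push_cast; rfl
      rw [h1]
      refine htmax.trans_lt ?_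
      rcases le_total ((π / 2 - (w α).arg) / θ) ((π / 2 - (w β).arg) / θ) with h | h
      · rw [max_eq_right h]
        exact lt_max_of_lt_right htβ
      · rw [max_eq_left h]
        exact lt_max_of_lt_left htα
    have h0t : 0 ≤ (π / 2 - (w (α + β)).arg) / θ := by
      have hargb := abs_lt.mp (Complex.abs_arg_lt_pi_div_two_iff.mpr (Or.inl hwαβ))
      exact (div_pos (by linarith [hargb.2]) hθ0).le
    have hmain := (Nat.floor_lt h0t).mpr hfinal
    omega
  · -- case θ = π
    subst hpi
    rw [Real.cos_pi] at hv'
    have hv2 : x e + x.symm e = (-2 : ℝ) • e := by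
      rw [hv']; norm_num
    have hip : (inner ℝ (x e) e : ℝ) + (inner ℝ (x.symm e) e : ℝ) = -2 * ‖e‖ ^ 2 := by
      have := congrArg (fun v => (inner ℝ v e : ℝ)) hv2
      simpa [inner_add_left, real_inner_smul_left, real_inner_self_eq_norm_sq] using this
    have hEE : ‖e‖ * ‖e‖ = ‖e‖ ^ 2 := (sq ‖e‖).symm
    have c1 := abs_le.mp (abs_real_inner_le_norm (x e) e)
    rw [x.norm_map, hEE] at c1
    have c2 := abs_le.mp (abs_real_inner_le_norm (x.symm e) e)
    rw [x.symm.norm_map, hEE] at c2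
    have hxee : (inner ℝ (x e) e : ℝ) = -(‖e‖ ^ 2) := by linarith [c1.1, c2.1]
    have hnorm : ‖x e + e‖ ^ 2 = 0 := by
      rw [norm_add_sq_real, x.norm_map, hxee]; ring
    have hadd0 : x e + e = 0 := norm_eq_zero.mp (pow_eq_zero_iff two_ne_zero |>.mp hnorm)
    have hxe : x e = -e := eq_neg_of_add_eq_zero_left hadd0
    have hsymm : x.symm e = -e := by
      have h1 := congrArg x.symm hxe
      rw [x.symm_apply_apply, map_neg] at h1
      exact neg_eq_iff_eq_neg.mp h1.symm
    have hone : ∀ γ : V, (inner ℝ e ((x ^ 1) γ) : ℝ) = -(inner ℝ e γ : ℝ) := by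
      intro γ
      rw [hinner 1 γ, pow_one, hsymm, inner_neg_left]
    have h1αβ : (x ^ 1) (α + β) ∈ -Φpos :=
      hposS _ (Or.inl hs) 1 (by rw [hone]; linarith)
    have h1α : (x ^ 1) α ∈ -Φpos :=
      hposS _ (Or.inl hα) 1 (by rw [hone]; linarith)
    have hle : sInf {i : ℕ | 1 ≤ i ∧ (x ^ i) (α + β) ∈ -Φpos} ≤ 1 :=
      Nat.sInf_le ⟨le_refl 1, h1αβ⟩
    have hnα := Nat.sInf_mem (⟨1, le_refl 1, h1α⟩ :
      {i : ℕ | 1 ≤ i ∧ (x ^ i) α ∈ -Φpos}.Nonempty)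
    exact hle.trans (le_max_of_le_left hnα.1)
end
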